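/- Let L be the loop-less Laplacian of a directed weighted graph and α ⊊ [n]. If α is not a reachable subset, then L[αᶜ,αᶜ] is singular. Combined with the converse, α is a reachable subset if and only if L[αᶜ,αᶜ] is invertible. -/

import Mathlib

open Matrix Finset

/-- The submatrix of `A` with rows in `s` and columns in `t`. -/
noncomputable def subm {ι : Type*} [Fintype ι] [DecidableEq ι]
    (A : Matrix ι ι ℝ) (s t : Finset ι) : Matrix s t ℝ :=
  Matrix.of fun i j => A i j

/-- The Schur complement `A/A[αᶜ,αᶜ]`, i.e. the Kron reduction keeping the nodes of `α`. -/
noncomputable def schur {ι : Type*} [Fintype ι] [DecidableEq ι]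
    (A : Matrix ι ι ℝ) (α : Finset ι) : Matrix α α ℝ :=
  subm A α α - subm A α αᶜ * (subm A αᶜ αᶜ)⁻¹ * subm A αᶜ α

/-- The loopy Laplacian `Q = D - A + diag(Aᵢᵢ)` of the graph with adjacency matrix `A`. -/
noncomputable def loopyLap {n : ℕ} (A : Matrix (Fin n) (Fin n) ℝ) : Matrix (Fin n) (Fin n) ℝ :=
  Matrix.of fun i j => if i = j then ∑ k, A i k else -A i j

/-- The loop-less Laplacian `L = D - A` of the graph with adjacency matrix `A`. -/
noncomputable def looplessLap {n : ℕ} (A : Matrix (Fin n) (Fin n) ℝ) : Matrix (Fin n) (Fin n) ℝ :=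
  Matrix.of fun i j => if i = j then (∑ k, A i k) - A i i else -A i j

/-- `α` is a reachable subset: every interior node has a directed path to some boundary node. -/
def ReachableSubset {n : ℕ} (A : Matrix (Fin n) (Fin n) ℝ) (α : Finset (Fin n)) : Prop :=
  ∀ i ∉ α, ∃ j ∈ α, Relation.ReflTransGen (fun u v => 0 < A u v) i j

lemma aux_det_zero {ι : Type*} [Fintype ι] [DecidableEq ι] (B : Matrix ι ι ℝ)
    (p : ι → Prop) [DecidablePred p] (hne : ∃ x, p x)
    (h0 : ∀ x, p x → ∀ y, ¬ p y → B x y = 0)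
    (hsum : ∀ x, p x → ∑ y, B x y = 0) : B.det = 0 := by
  rw [Matrix.twoBlockTriangular_det' B p h0]
  apply mul_eq_zero_of_left
  apply Matrix.exists_mulVec_eq_zero_iff.mp
  refine ⟨fun _ => 1, ?_, ?_⟩
  · obtain ⟨x, hx⟩ := hne
    intro h
    exact one_ne_zero (congrFun h ⟨x, hx⟩)
  · funext x
    show ∑ y : {a // p a}, Matrix.toSquareBlockProp B p x y * 1 = 0
    have h1 : ∑ y ∈ univ.filter p, B x.val y = ∑ y : {a // p a}, B x.val y.val :=
      Finset.sum_subtype (univ.filter p) (by simp) (fun y => B x.val y)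
    simp only [Matrix.toSquareBlockProp, Matrix.toBlock_apply, mul_one]
    rw [← h1]
    have h2 := Finset.sum_filter_add_sum_filter_not univ p (fun y => B x.val y)
    have h3 : ∑ y ∈ univ.filter (fun y => ¬ p y), B x.val y = 0 :=
      Finset.sum_eq_zero fun y hy => h0 x.val x.2 y (Finset.mem_filter.mp hy).2
    rw [h3, add_zero] at h2
    rw [h2]
    exact hsum x.val x.2

section Main

variable {n : ℕ} (A : Matrix (Fin n) (Fin n) ℝ) (α : Finset (Fin n))

lemma subm_diag (u : ↥(αᶜ)) :
    subm (looplessLap A) αᶜ αᶜ u u = (∑ k, A u.val k) - A u.val u.val := by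
  simp [subm, looplessLap]

lemma subm_off {u j : ↥(αᶜ)} (h : u ≠ j) :
    subm (looplessLap A) αᶜ αᶜ u j = -A u.val j.val := by
  have : (u : Fin n) ≠ j := fun hh => h (Subtype.ext hh)
  simp [subm, looplessLap, this, h]

/-- sum of A over the off-diagonal coerced entries. -/
lemma erase_sum (u : ↥(αᶜ)) :
    ∑ j ∈ (univ : Finset ↥(αᶜ)).erase u, A u.val j.val
      = (∑ k ∈ αᶜ, A u.val k) - A u.val u.val := by
  rw [Finset.sum_erase_eq_sub (mem_univ u)]
  congr 1
  exact Finset.sum_coe_sort αᶜ (fun k => A u.val k)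

end Main

/-- For the loop-less Laplacian `L` of a directed weighted graph and a proper subset `α`,
`α` is a reachable subset if and only if `L[αᶜ,αᶜ]` is invertible. -/
theorem reachable_iff_submatrix_invertible {n : ℕ} (A : Matrix (Fin n) (Fin n) ℝ)
    (hA : ∀ i j, 0 ≤ A i j) (α : Finset (Fin n)) (hα : α ≠ Finset.univ) :
    ReachableSubset A α ↔ IsUnit (subm (looplessLap A) αᶜ αᶜ).det := by
  classical
  rw [isUnit_iff_ne_zero]
  constructor
  · -- reachable → det ≠ 0
    intro hreach hdet
    obtain ⟨v, hv, hMv⟩ := Matrix.exists_mulVec_eq_zero_iff.mpr hdet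
    obtain ⟨j0, hj0'⟩ := Function.ne_iff.mp hv
    have hj0 : v j0 ≠ 0 := by simpa using hj0'
    obtain ⟨i₀, -, hmax⟩ := Finset.exists_max_image (univ : Finset ↥(αᶜ))
      (fun j => |v j|) ⟨j0, mem_univ j0⟩
    set m := |v i₀| with hmdef
    have hmax' : ∀ j : ↥(αᶜ), |v j| ≤ m := fun j => hmax j (mem_univ j)
    have hm : 0 < m := lt_of_lt_of_le (abs_pos.mpr hj0) (hmax' j0)
    -- the row equation
    have hrow : ∀ u : ↥(αᶜ), ((∑ k, A u.val k) - A u.val u.val) * v u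
        = ∑ j ∈ (univ : Finset ↥(αᶜ)).erase u, A u.val j.val * v j := by
      intro u
      have h0 : ∑ j, subm (looplessLap A) αᶜ αᶜ u j * v j = 0 := congrFun hMv u
      have hsc : ∑ x ∈ (univ : Finset ↥(αᶜ)).erase u, subm (looplessLap A) αᶜ αᶜ u x * v x
          = -∑ j ∈ (univ : Finset ↥(αᶜ)).erase u, A u.val j.val * v j := by
        rw [← Finset.sum_neg_distrib]
        refine Finset.sum_congr rfl fun j hj => ?_
        rw [subm_off A α (Ne.symm (Finset.mem_erase.mp hj).1)]; ring
      rw [← Finset.add_sum_erase _ _ (mem_univ u), subm_diag A α u, hsc] at h0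
      linarith
    -- the key claim
    have hclaim : ∀ u : ↥(αᶜ), |v u| = m →
        (∀ k ∈ α, A u.val k = 0) ∧ (∀ w : ↥(αᶜ), 0 < A u.val w.val → |v w| = m) := by
      intro u hu
      set d := (∑ k, A u.val k) - A u.val u.val with hd
      set s := (∑ k ∈ αᶜ, A u.val k) - A u.val u.val with hs
      have hsd : s ≤ d := by
        have : ∑ k ∈ αᶜ, A u.val k ≤ ∑ k, A u.val k :=
          Finset.sum_le_sum_of_subset_of_nonneg (Finset.subset_univ _)
            (fun k _ _ => hA _ k)
        simpa [hd, hs] using this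
      have hdnn : 0 ≤ d := by
        rw [hd, ← Finset.sum_erase_eq_sub (mem_univ u.val)]
        exact Finset.sum_nonneg fun k _ => hA _ k
      have hds : d - s = ∑ k ∈ α, A u.val k := by
        have := Finset.sum_add_sum_compl α (fun k => A u.val k)
        rw [hd, hs]; linarith
      have h1 : d * m ≤ ∑ j ∈ (univ : Finset ↥(αᶜ)).erase u, A u.val j.val * |v j| := by
        calc d * m = |d * v u| := by
              rw [abs_mul, abs_of_nonneg hdnn, hu]
          _ = |∑ j ∈ (univ : Finset ↥(αᶜ)).erase u, A u.val j.val * v j| := by rw [hrow u]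
          _ ≤ ∑ j ∈ (univ : Finset ↥(αᶜ)).erase u, |A u.val j.val * v j| :=
              Finset.abs_sum_le_sum_abs _ _
          _ = ∑ j ∈ (univ : Finset ↥(αᶜ)).erase u, A u.val j.val * |v j| := by
              refine Finset.sum_congr rfl fun j _ => ?_
              rw [abs_mul, abs_of_nonneg (hA _ _)]
      have h2 : ∑ j ∈ (univ : Finset ↥(αᶜ)).erase u, A u.val j.val * |v j| ≤ s * m := by
        calc ∑ j ∈ (univ : Finset ↥(αᶜ)).erase u, A u.val j.val * |v j|
            ≤ ∑ j ∈ (univ : Finset ↥(αᶜ)).erase u, A u.val j.val * m :=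
              Finset.sum_le_sum fun j _ => mul_le_mul_of_nonneg_left (hmax' j) (hA _ _)
          _ = s * m := by rw [← Finset.sum_mul, erase_sum A α u]
      have hsum0 : ∑ k ∈ α, A u.val k = 0 := by
        have hle : (d - s) * m ≤ 0 := by nlinarith
        have : d - s ≤ 0 := by
          by_contra hc
          push_neg at hc
          nlinarith
        have hnn : 0 ≤ ∑ k ∈ α, A u.val k := Finset.sum_nonneg fun k _ => hA _ k
        linarith [hds ▸ this]
      have heachα : ∀ k ∈ α, A u.val k = 0 :=
        (Finset.sum_eq_zero_iff_of_nonneg (fun k _ => hA _ k)).mp hsum0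
      refine ⟨heachα, ?_⟩
      -- equality in h1, h2
      have hds0 : d = s := by
        have := hds; linarith [hsum0 ▸ hds]
      have heq : ∑ j ∈ (univ : Finset ↥(αᶜ)).erase u, A u.val j.val * (m - |v j|) = 0 := by
        have hT : ∑ j ∈ (univ : Finset ↥(αᶜ)).erase u, A u.val j.val * |v j| = s * m := by
          have : s * m ≤ d * m := by nlinarith
          linarith
        have hSm : ∑ j ∈ (univ : Finset ↥(αᶜ)).erase u, A u.val j.val * m = s * m := by
          rw [← Finset.sum_mul, erase_sum A α u]
        rw [Finset.sum_congr rfl (fun j _ => by ring_nf : ∀ j ∈ (univ : Finset ↥(αᶜ)).erase u,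
          A u.val j.val * (m - |v j|) = A u.val j.val * m - A u.val j.val * |v j|)]
        rw [Finset.sum_sub_distrib, hSm, hT, sub_self]
      have heach := (Finset.sum_eq_zero_iff_of_nonneg
        (fun j _ => mul_nonneg (hA _ _) (by linarith [hmax' j]))).mp heq
      intro w hw
      by_cases hwu : w = u
      · rw [hwu, hu]
      · have := heach w (Finset.mem_erase.mpr ⟨hwu, mem_univ w⟩)
        have h3 : m - |v w| = 0 := by
          rcases mul_eq_zero.mp this with h | h
          · exact absurd h (ne_of_gt hw)
          · exact h
        linarith
    -- propagate along the path
    have hi₀ : (i₀ : Fin n) ∉ α := Finset.mem_compl.mp i₀.2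
    obtain ⟨j, hjα, hpath⟩ := hreach i₀.val hi₀
    have key : ∀ b, Relation.ReflTransGen (fun u v => 0 < A u v) i₀.val b →
        ∃ hb : b ∈ αᶜ, |v ⟨b, hb⟩| = m := by
      intro b hb
      induction hb with
      | refl => exact ⟨i₀.2, rfl⟩
      | @tail b c hab hbc ih =>
        obtain ⟨hbmem, hbm⟩ := ih
        have hcl := hclaim ⟨b, hbmem⟩ hbm
        have hcα : c ∉ α := by
          intro hc
          have := hcl.1 c hc
          rw [this] at hbc
          exact lt_irrefl 0 hbc
        exact ⟨Finset.mem_compl.mpr hcα, hcl.2 ⟨c, Finset.mem_compl.mpr hcα⟩ hbc⟩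
    obtain ⟨hjc, -⟩ := key j hpath
    exact (Finset.mem_compl.mp hjc) hjα
  · -- det ≠ 0 → reachable
    intro hdet i hiα
    by_contra hno
    push_neg at hno
    apply hdet
    have hreached : ∀ b, Relation.ReflTransGen (fun u v => 0 < A u v) i b → b ∉ α :=
      fun b hb hbα => hno b hbα hb
    apply aux_det_zero _ (fun u : ↥(αᶜ) => Relation.ReflTransGen (fun a b => 0 < A a b) i u.val)
    · exact ⟨⟨i, Finset.mem_compl.mpr hiα⟩, Relation.ReflTransGen.refl⟩
    · intro x hx y hy
      have hxy : x ≠ y := fun h => hy (h ▸ hx)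
      rw [subm_off A α hxy]
      have hA0 : A x.val y.val = 0 := by
        by_contra h
        exact hy (hx.tail (lt_of_le_of_ne (hA _ _) (Ne.symm h)))
      rw [hA0, neg_zero]
    · intro x hx
      have hsc : ∑ y ∈ (univ : Finset ↥(αᶜ)).erase x, subm (looplessLap A) αᶜ αᶜ x y
          = -∑ j ∈ (univ : Finset ↥(αᶜ)).erase x, A x.val j.val := by
        rw [← Finset.sum_neg_distrib]
        exact Finset.sum_congr rfl fun j hj =>
          subm_off A α (Ne.symm (Finset.mem_erase.mp hj).1)
      rw [← Finset.add_sum_erase _ _ (mem_univ x), subm_diag A α x, hsc, erase_sum A α x]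
      have hzero : ∀ k ∈ α, A x.val k = 0 := by
        intro k hk
        by_contra h
        exact (hreached k (hx.tail (lt_of_le_of_ne (hA _ _) (Ne.symm h)))) hk
      have hsplit := Finset.sum_add_sum_compl α (fun k => A x.val k)
      have : ∑ k ∈ α, A x.val k = 0 := Finset.sum_eq_zero hzero
      linarith
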